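/- arXiv:2007.00125 — 2 statements merged into one kernel-verified Lean document; each statement's English description precedes it below -/
import Mathlib

section
/- Tower of Hanoi reachability: with states Fin n → Fin 3 (disk i is on peg x i, disk 0 largest) and the move relation M where M x y iff there exists i and distinct pegs p,q,r with x i = p, y i = r, x j = y j for all j ≠ i, and x j = q for all j > i (all smaller disks on the third peg), the reflexive-transitive closure of M is the universal relation: any configuration is reachable from any other. -/
theorem stmt_7 (n : ℕ) (M : (Fin n → Fin 3) → (Fin n → Fin 3) → Prop)
    (hM : ∀ x y, M x y ↔ ∃ (i : Fin n) (p q r : Fin 3),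
      p ≠ q ∧ q ≠ r ∧ p ≠ r ∧
      x i = p ∧ y i = r ∧ (∀ j ≠ i, x j = y j) ∧ (∀ j, i < j → x j = q)) :
    ∀ x y : Fin n → Fin 3, Relation.ReflTransGen M x y := by
  have key : ∀ m : ℕ, m ≤ n → ∀ x y : Fin n → Fin 3,
      (∀ i : Fin n, (i : ℕ) < n - m → x i = y i) → Relation.ReflTransGen M x y := by
    intro m
    induction m with
    | zero =>
      intro _ x y h
      have : x = y := funext fun i => h i (by omega)
      exact this ▸ Relation.ReflTransGen.refl
    | succ m ih =>
      intro hmn x y h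
      have hm : m ≤ n := by omega
      set i0 : Fin n := ⟨n - (m + 1), by omega⟩ with hi0
      by_cases heq : x i0 = y i0
      · apply ih hm x y
        intro i hi
        rcases lt_or_eq_of_le (Nat.lt_succ_iff.mp (by omega : (i : ℕ) < n - m - 1 + 1)) with h1 | h1
        · exact h i (by omega)
        · have : i = i0 := Fin.ext (by simp [hi0]; omega)
          rw [this]; exact heq
      · set p := x i0 with hp
        set r := y i0 with hr
        set q : Fin 3 := -(p + r) with hq
        have hqpr : q ≠ p ∧ q ≠ r ∧ p ≠ r := by
          have : ∀ p r : Fin 3, p ≠ r → -(p + r) ≠ p ∧ -(p + r) ≠ r := by decide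
          exact ⟨(this p r heq).1, (this p r heq).2, heq⟩
        set z : Fin n → Fin 3 := fun j => if i0 < j then q else x j with hz
        set w : Fin n → Fin 3 := Function.update z i0 r with hw
        have hxz : Relation.ReflTransGen M x z := by
          apply ih hm
          intro i hi
          have : ¬ i0 < i := by
            rw [Fin.lt_def]; simp [hi0]; omega
          simp [hz, this]
        have hzw : M z w := by
          rw [hM]
          refine ⟨i0, p, q, r, hqpr.1.symm, hqpr.2.1, hqpr.2.2, ?_, ?_, ?_, ?_⟩
          · simp [hz, hp]
          · simp [hw]
          · intro j hj; simp [hw, Function.update_of_ne hj]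
          · intro j hj; simp [hz, hj]
        have hwy : Relation.ReflTransGen M w y := by
          apply ih hm
          intro i hi
          rcases lt_or_eq_of_le (Nat.lt_succ_iff.mp (by omega : (i : ℕ) < n - m - 1 + 1)) with h1 | h1
          · have hne : i ≠ i0 := by
              intro hc; rw [hc] at h1; simp [hi0] at h1; omega
            have : ¬ i0 < i := by rw [Fin.lt_def]; simp [hi0]; omega
            simp [hw, Function.update_of_ne hne, hz, this, h i (by omega)]
          · have : i = i0 := Fin.ext (by simp [hi0]; omega)
            rw [this]; simp [hw, hr]
        exact (hxz.trans (Relation.ReflTransGen.single hzw)).trans hwy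
  intro x y
  exact key n le_rfl x y (fun i hi => by omega)
end

section
/- In the Tower of Hanoi system, for each configuration x : Fin n → Fin 3, the completed rewrite system reaches the all-ones normal form: x M* c where c is the constant configuration with every disk on peg 0; consequently any two configurations are joinable (rewrite to a common configuration) under M*. -/
theorem stmt_10 (n : ℕ) (M : (Fin n → Fin 3) → (Fin n → Fin 3) → Prop)
    (hM : ∀ x y, M x y ↔ ∃ (i : Fin n) (p q r : Fin 3),
      p ≠ q ∧ q ≠ r ∧ p ≠ r ∧
      x i = p ∧ y i = r ∧ (∀ j ≠ i, x j = y j) ∧ (∀ j, i < j → x j = q)) :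
    (∀ x : Fin n → Fin 3, Relation.ReflTransGen M x (fun _ => 0)) ∧
    (∀ x y : Fin n → Fin 3,
      ∃ u, Relation.ReflTransGen M x u ∧ Relation.ReflTransGen M y u) := by
  have hthird : ∀ p t : Fin 3, p ≠ t → ∃ q : Fin 3, q ≠ p ∧ q ≠ t := by decide
  have key : ∀ m k : ℕ, n ≤ k + m → ∀ (x : Fin n → Fin 3) (t : Fin 3),
      ∃ y, Relation.ReflTransGen M x y ∧ (∀ j : Fin n, k ≤ (j : ℕ) → y j = t) ∧
        (∀ j : Fin n, (j : ℕ) < k → y j = x j) := by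
    intro m
    induction m with
    | zero =>
      intro k hk x t
      exact ⟨x, .refl, fun j hj => absurd j.isLt (by omega), fun j _ => rfl⟩
    | succ m ih =>
      intro k hk x t
      by_cases hkn : n ≤ k + m
      · exact ih k hkn x t
      have hk' : k < n := by omega
      set i : Fin n := ⟨k, hk'⟩ with hi
      by_cases hpt : x i = t
      · obtain ⟨y, hxy, h1, h2⟩ := ih (k + 1) (by omega) x t
        refine ⟨y, hxy, ?_, fun j hj => h2 j (by omega)⟩
        intro j hj
        rcases Nat.lt_or_ge (j : ℕ) (k + 1) with h | h
        · have hji : j = i := Fin.ext (by simp [hi]; omega)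
          rw [hji, h2 i (by simp [hi])]
          exact hpt
        · exact h1 j h
      · obtain ⟨q, hq1, hq2⟩ := hthird (x i) t hpt
        obtain ⟨y₁, hxy₁, h1₁, h2₁⟩ := ih (k + 1) (by omega) x q
        set y₂ := Function.update y₁ i t with hy₂
        have hstep : M y₁ y₂ := by
          rw [hM]
          refine ⟨i, x i, q, t, hq1.symm, hq2, hpt, ?_, ?_, ?_, ?_⟩
          · exact h2₁ i (by simp [hi])
          · simp [hy₂]
          · intro j hj; simp [hy₂, Function.update_of_ne hj]
          · intro j hj
            exact h1₁ j (by simpa [hi, Nat.succ_le_iff] using (Fin.lt_iff_val_lt_val.1 hj))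
        obtain ⟨y₃, hy₂y₃, h1₃, h2₃⟩ := ih (k + 1) (by omega) y₂ t
        refine ⟨y₃, (hxy₁.tail hstep).trans hy₂y₃, ?_, ?_⟩
        · intro j hj
          rcases Nat.lt_or_ge (j : ℕ) (k + 1) with h | h
          · have hji : j = i := Fin.ext (by simp [hi]; omega)
            rw [hji, h2₃ i (by simp [hi])]
            simp [hy₂]
          · exact h1₃ j h
        · intro j hj
          have hji : j ≠ i := by
            intro h; rw [h] at hj; simp [hi] at hj
          rw [h2₃ j (by omega), hy₂, Function.update_of_ne hji, h2₁ j (by omega)]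
  have hzero : ∀ x : Fin n → Fin 3, Relation.ReflTransGen M x (fun _ => 0) := by
    intro x
    obtain ⟨y, hxy, h1, _⟩ := key n 0 (by omega) x 0
    have hy : y = fun _ => 0 := funext fun j => h1 j (Nat.zero_le _)
    exact hy ▸ hxy
  exact ⟨hzero, fun x y => ⟨fun _ => 0, hzero x, hzero y⟩⟩
end
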